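/- Let N ≥ 1, 1 < p < 2 and 0 < ν ≤ C, and let Ψ : ℝ^N → ℝ be of class C¹ on ℝ^N, of class C² on ℝ^N \ {0}, and satisfying the sandwich condition for Ψ_{p,0} with constants ν, C. Then for every η, ξ ∈ ℝ^N with η ≠ 0: ((p−1)ν / |η|^{2−p}) |ξ|² ≤ Ψ''(η)[ξ]² ≤ (C / |η|^{2−p}) |ξ|², where Ψ''(η)[ξ]² denotes the second derivative of Ψ at η evaluated as a quadratic form at ξ. -/

import Mathlib

open Filter Topology Set

section Helpers

variable {E : Type*} [NormedAddCommGroup E] [InnerProductSpace ℝ E]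

/-- Derivative along a line. -/
lemma line_hasDerivAt {f : E → ℝ} (η ξ : E) (t : ℝ)
    (hf : DifferentiableAt ℝ f (η + t • ξ)) :
    HasDerivAt (fun s => f (η + s • ξ)) (fderiv ℝ f (η + t • ξ) ξ) t := by
  have hc : HasDerivAt (fun s : ℝ => η + s • ξ) ξ t := by
    simpa using ((hasDerivAt_id t).smul_const ξ).const_add η
  exact hf.hasFDerivAt.comp_hasDerivAt t hc

/-- Second derivative along a line, at `t = 0`. -/
lemma line_hasDerivAt2 {f : E → ℝ} {U : Set E} (hU : IsOpen U) {η : E} (hη : η ∈ U)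
    (hf : ContDiffOn ℝ 2 f U) (ξ : E) :
    HasDerivAt (fun t : ℝ => fderiv ℝ f (η + t • ξ) ξ)
      ((fderiv ℝ (fderiv ℝ f) η ξ) ξ) 0 := by
  have h2 : ContDiffAt ℝ 2 f η := hf.contDiffAt (hU.mem_nhds hη)
  have h2' : ContDiffAt ℝ 1 (fderiv ℝ f) η := h2.fderiv_right (by norm_num)
  have hd : HasFDerivAt (fderiv ℝ f) (fderiv ℝ (fderiv ℝ f) η) η :=
    (h2'.differentiableAt one_ne_zero).hasFDerivAt
  have hc : HasDerivAt (fun s : ℝ => η + s • ξ) ξ 0 := by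
    simpa using ((hasDerivAt_id (0:ℝ)).smul_const ξ).const_add η
  have hd' : HasFDerivAt (fderiv ℝ f) (fderiv ℝ (fderiv ℝ f) η) (η + (0:ℝ) • ξ) := by
    simpa using hd
  have hcomp : HasDerivAt (fun t : ℝ => fderiv ℝ f (η + t • ξ))
      (fderiv ℝ (fderiv ℝ f) η ξ) 0 := hd'.comp_hasDerivAt 0 hc
  have := hcomp.clm_apply (hasDerivAt_const (0:ℝ) ξ)
  simpa using this

/-- If `f` is convex and `C²` near `η`, its Hessian quadratic form at `η` is nonnegative. -/
lemma hessian_nonneg {f : E → ℝ} {U : Set E} (hU : IsOpen U) {η : E} (hη : η ∈ U)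
    (hf : ContDiffOn ℝ 2 f U) (hconv : ConvexOn ℝ Set.univ f) (ξ : E) :
    0 ≤ (fderiv ℝ (fderiv ℝ f) η ξ) ξ := by
  set ψ : ℝ → ℝ := fun t => fderiv ℝ f (η + t • ξ) ξ with hψdef
  set Q : ℝ := (fderiv ℝ (fderiv ℝ f) η ξ) ξ with hQdef
  have hψ : HasDerivAt ψ Q 0 := line_hasDerivAt2 hU hη hf ξ
  have hcont : Continuous fun t : ℝ => η + t • ξ := by continuity
  have h1 : ∀ᶠ t in 𝓝 (0:ℝ), η + t • ξ ∈ U := by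
    have h0 : (fun t : ℝ => η + t • ξ) 0 = η := by simp
    exact hcont.continuousAt.preimage_mem_nhds (h0 ▸ hU.mem_nhds (by simpa [h0] using hη))
  obtain ⟨ε, hε, hball⟩ := Metric.eventually_nhds_iff.mp h1
  have hφ : ∀ t : ℝ, dist t 0 < ε → HasDerivAt (fun s => f (η + s • ξ)) (ψ t) t := by
    intro t ht
    exact line_hasDerivAt η ξ t
      ((hf.contDiffAt (hU.mem_nhds (hball ht))).differentiableAt two_ne_zero)
  have hφconv : ConvexOn ℝ Set.univ (fun t : ℝ => f (η + t • ξ)) := by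
    have h := hconv.comp_affineMap (AffineMap.lineMap η (η + ξ) : ℝ →ᵃ[ℝ] E)
    simp only [Set.preimage_univ] at h
    have e : (fun t : ℝ => f (η + t • ξ)) = f ∘ AffineMap.lineMap η (η + ξ) := by
      funext t
      simp [AffineMap.lineMap_apply, add_comm]
    rw [e]; exact h
  have hmono : ∀ t : ℝ, 0 < t → t < ε → ψ 0 ≤ ψ t := by
    intro t ht htε
    have d0 := hφ 0 (by simpa using hε)
    have dt := hφ t (by simpa [abs_of_pos ht] using htε)
    calc ψ 0 ≤ slope (fun s => f (η + s • ξ)) 0 t :=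
          hφconv.le_slope_of_hasDerivAt (mem_univ _) (mem_univ _) ht d0
      _ ≤ ψ t := hφconv.slope_le_of_hasDerivAt (mem_univ _) (mem_univ _) ht dt
  have hT : Tendsto (slope ψ 0) (𝓝[>] (0:ℝ)) (𝓝 Q) :=
    (hasDerivAt_iff_tendsto_slope.mp hψ).mono_left
      (nhdsWithin_mono 0 (fun x hx => ne_of_gt hx))
  refine ge_of_tendsto hT ?_
  filter_upwards [Ioo_mem_nhdsGT_of_mem (Set.mem_Ico.mpr ⟨le_rfl, hε⟩)] with t ht
  rw [slope_def_field]
  have := hmono t ht.1 ht.2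
  have h' : (0:ℝ) ≤ ψ t - ψ 0 := sub_nonneg.mpr this
  have := div_nonneg h' (sub_nonneg.mpr ht.1.le)
  simpa [div_eq_mul_inv] using this

lemma fderiv2_sub_const_mul {f g : E → ℝ} {U : Set E} (hU : IsOpen U) {η : E} (hη : η ∈ U)
    (hf : ContDiffOn ℝ 2 f U) (hg : ContDiffOn ℝ 2 g U) (c : ℝ) (ξ : E) :
    (fderiv ℝ (fderiv ℝ (fun x => f x - c * g x)) η ξ) ξ
      = (fderiv ℝ (fderiv ℝ f) η ξ) ξ - c * (fderiv ℝ (fderiv ℝ g) η ξ) ξ := by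
  have hev : fderiv ℝ (fun x => f x - c * g x)
      =ᶠ[𝓝 η] fun x => fderiv ℝ f x - c • fderiv ℝ g x := by
    filter_upwards [hU.mem_nhds hη] with x hx
    have hfx : DifferentiableAt ℝ f x :=
      (hf.contDiffAt (hU.mem_nhds hx)).differentiableAt two_ne_zero
    have hgx : DifferentiableAt ℝ g x :=
      (hg.contDiffAt (hU.mem_nhds hx)).differentiableAt two_ne_zero
    rw [fderiv_fun_sub hfx (hgx.const_mul c), fderiv_const_mul hgx c]
  have h1 : DifferentiableAt ℝ (fderiv ℝ f) η :=
    (((hf.contDiffAt (hU.mem_nhds hη)).fderiv_right (by norm_num)).differentiableAt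
      one_ne_zero)
  have h2 : DifferentiableAt ℝ (fderiv ℝ g) η :=
    (((hg.contDiffAt (hU.mem_nhds hη)).fderiv_right (by norm_num)).differentiableAt
      one_ne_zero)
  rw [hev.fderiv_eq, fderiv_fun_sub h1 (h2.fun_const_smul c), fderiv_fun_const_smul h2 c]
  simp

lemma fderiv2_const_mul_sub {f g : E → ℝ} {U : Set E} (hU : IsOpen U) {η : E} (hη : η ∈ U)
    (hf : ContDiffOn ℝ 2 f U) (hg : ContDiffOn ℝ 2 g U) (c : ℝ) (ξ : E) :
    (fderiv ℝ (fderiv ℝ (fun x => c * g x - f x)) η ξ) ξ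
      = c * (fderiv ℝ (fderiv ℝ g) η ξ) ξ - (fderiv ℝ (fderiv ℝ f) η ξ) ξ := by
  have hev : fderiv ℝ (fun x => c * g x - f x)
      =ᶠ[𝓝 η] fun x => c • fderiv ℝ g x - fderiv ℝ f x := by
    filter_upwards [hU.mem_nhds hη] with x hx
    have hfx : DifferentiableAt ℝ f x :=
      (hf.contDiffAt (hU.mem_nhds hx)).differentiableAt two_ne_zero
    have hgx : DifferentiableAt ℝ g x :=
      (hg.contDiffAt (hU.mem_nhds hx)).differentiableAt two_ne_zero
    rw [fderiv_fun_sub (hgx.const_mul c) hfx, fderiv_const_mul hgx c]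
  have h1 : DifferentiableAt ℝ (fderiv ℝ f) η :=
    (((hf.contDiffAt (hU.mem_nhds hη)).fderiv_right (by norm_num)).differentiableAt
      one_ne_zero)
  have h2 : DifferentiableAt ℝ (fderiv ℝ g) η :=
    (((hg.contDiffAt (hU.mem_nhds hη)).fderiv_right (by norm_num)).differentiableAt
      one_ne_zero)
  rw [hev.fderiv_eq, fderiv_fun_sub (h2.fun_const_smul c) h1, fderiv_fun_const_smul h2 c]
  simp

lemma Phi_contDiffOn (p : ℝ) :
    ContDiffOn ℝ 2 (fun x : E => (1/p) * ((‖x‖ ^ 2 : ℝ) ^ (p/2))) {(0:E)}ᶜ := by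
  intro x hx
  have hx0 : (‖x‖ ^ 2 : ℝ) ≠ 0 := by
    have hne : x ≠ 0 := hx
    simpa using pow_ne_zero 2 (norm_ne_zero_iff.mpr hne)
  have h1 : ContDiffAt ℝ 2 (fun x : E => ‖x‖ ^ 2 : E → ℝ) x :=
    (contDiff_norm_sq ℝ (E := E) (n := 2)).contDiffAt
  have h2 : ContDiffAt ℝ 2 (fun t : ℝ => t ^ (p/2)) (‖x‖ ^ 2) :=
    Real.contDiffAt_rpow_const_of_ne hx0
  exact ((h2.comp x h1).const_smul (1/p)).contDiffWithinAt

lemma Phi_hasFDerivAt {p : ℝ} (hp : p ≠ 0) {x : E} (hx : x ≠ 0) :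
    HasFDerivAt (fun x : E => (1/p) * ((‖x‖ ^ 2 : ℝ) ^ (p/2)))
      (((‖x‖ ^ 2 : ℝ) ^ (p/2 - 1)) • innerSL ℝ x) x := by
  have hx0 : (‖x‖ ^ 2 : ℝ) ≠ 0 := by
    simpa using pow_ne_zero 2 (norm_ne_zero_iff.mpr hx)
  have hq : HasFDerivAt (fun y : E => (‖y‖ ^ 2 : ℝ)) (2 • innerSL ℝ x) x :=
    (hasStrictFDerivAt_norm_sq x).hasFDerivAt
  have hr : HasDerivAt (fun t : ℝ => t ^ (p/2)) ((p/2) * (‖x‖ ^ 2 : ℝ) ^ (p/2 - 1)) (‖x‖ ^ 2) :=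
    Real.hasDerivAt_rpow_const (Or.inl hx0)
  have hcomp := hr.comp_hasFDerivAt x hq
  have := hcomp.const_mul (1/p)
  apply this.congr_fderiv
  ext y
  simp only [ContinuousLinearMap.smul_apply, ContinuousLinearMap.coe_smul', Pi.smul_apply,
    smul_eq_mul]
  field_simp
  ring

lemma Phi_hessian {p : ℝ} (hp : p ≠ 0) {η : E} (hη : η ≠ 0) (ξ : E) :
    (fderiv ℝ (fderiv ℝ (fun x : E => (1/p) * ((‖x‖ ^ 2 : ℝ) ^ (p/2)))) η ξ) ξ
      = (p - 2) * (‖η‖ ^ 2 : ℝ) ^ (p/2 - 2) * (inner ℝ η ξ : ℝ) ^ 2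
        + (‖η‖ ^ 2 : ℝ) ^ (p/2 - 1) * ‖ξ‖ ^ 2 := by
  set Φ : E → ℝ := fun x : E => (1/p) * ((‖x‖ ^ 2 : ℝ) ^ (p/2)) with hΦ
  have hU : IsOpen ({(0:E)}ᶜ) := isOpen_compl_singleton
  have hηU : η ∈ ({(0:E)}ᶜ : Set E) := by simpa using hη
  have hL : HasDerivAt (fun t : ℝ => fderiv ℝ Φ (η + t • ξ) ξ)
      ((fderiv ℝ (fderiv ℝ Φ) η ξ) ξ) 0 := line_hasDerivAt2 hU hηU (Phi_contDiffOn p) ξ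
  have hcont : Continuous fun t : ℝ => η + t • ξ := by continuity
  have hne : ∀ᶠ t in 𝓝 (0:ℝ), η + t • ξ ∈ ({(0:E)}ᶜ : Set E) := by
    have h0 : (fun t : ℝ => η + t • ξ) 0 = η := by simp
    exact hcont.continuousAt.preimage_mem_nhds (h0 ▸ hU.mem_nhds (by simpa [h0] using hηU))
  have hev : (fun t : ℝ => fderiv ℝ Φ (η + t • ξ) ξ)
      =ᶠ[𝓝 (0:ℝ)] fun t : ℝ => (‖η + t • ξ‖ ^ 2 : ℝ) ^ (p/2 - 1) * (inner ℝ (η + t • ξ) ξ : ℝ) := by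
    filter_upwards [hne] with t ht
    rw [(Phi_hasFDerivAt hp ht).fderiv]
    simp only [ContinuousLinearMap.smul_apply, innerSL_apply_apply, smul_eq_mul]
  have hcurve : HasDerivAt (fun t : ℝ => η + t • ξ) ξ 0 := by
    simpa using ((hasDerivAt_id (0:ℝ)).smul_const ξ).const_add η
  have hu : HasDerivAt (fun t : ℝ => (‖η + t • ξ‖ ^ 2 : ℝ))
      (2 * (inner ℝ (η + (0:ℝ) • ξ) ξ : ℝ)) 0 := hcurve.norm_sq
  have hη0 : (‖η + (0:ℝ) • ξ‖ ^ 2 : ℝ) ≠ 0 := by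
    simpa using pow_ne_zero 2 (norm_ne_zero_iff.mpr hη)
  have ha : HasDerivAt (fun t : ℝ => (‖η + t • ξ‖ ^ 2 : ℝ) ^ (p/2 - 1))
      ((2 * (inner ℝ (η + (0:ℝ) • ξ) ξ : ℝ)) * (p/2 - 1)
        * (‖η + (0:ℝ) • ξ‖ ^ 2 : ℝ) ^ (p/2 - 1 - 1)) 0 :=
    hu.rpow_const (Or.inl hη0)
  have hb : HasDerivAt (fun t : ℝ => (inner ℝ (η + t • ξ) ξ : ℝ))
      ((inner ℝ (η + (0:ℝ) • ξ) (0:E) : ℝ) + (inner ℝ ξ ξ : ℝ)) 0 :=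
    hcurve.inner ℝ (hasDerivAt_const (0:ℝ) ξ)
  have hD := ha.mul hb
  have hQ : HasDerivAt (fun t : ℝ => (‖η + t • ξ‖ ^ 2 : ℝ) ^ (p/2 - 1)
      * (inner ℝ (η + t • ξ) ξ : ℝ)) ((fderiv ℝ (fderiv ℝ Φ) η ξ) ξ) 0 :=
    hL.congr_of_eventuallyEq hev.symm
  have := hQ.unique hD
  rw [this]
  simp only [zero_smul, add_zero, inner_zero_right]
  rw [real_inner_self_eq_norm_sq, show p/2 - 1 - 1 = p/2 - 2 by ring]
  ring

end Helpers

/-- The function `Ψ_{p,κ}(ξ) = (1/p) * ((κ² + |ξ|²)^(p/2) - κ^p)`. -/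
noncomputable def PsiPK (N : ℕ) (p κ : ℝ) (ξ : EuclideanSpace ℝ (Fin N)) : ℝ :=
  (1 / p) * ((κ ^ 2 + ‖ξ‖ ^ 2) ^ (p / 2) - κ ^ p)

/-- `Ψ` satisfies the sandwich condition for `Ψ_{p,κ}` with constants `ν ≤ C`:
both `Ψ - ν Ψ_{p,κ}` and `C Ψ_{p,κ} - Ψ` are convex. -/
def SandwichCond (N : ℕ) (p κ ν C : ℝ) (Ψ : EuclideanSpace ℝ (Fin N) → ℝ) : Prop :=
  ConvexOn ℝ Set.univ (fun ξ => Ψ ξ - ν * PsiPK N p κ ξ) ∧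
    ConvexOn ℝ Set.univ (fun ξ => C * PsiPK N p κ ξ - Ψ ξ)

/-- Let `1 < p < 2` and let `Ψ` be `C¹` on `ℝᴺ`, `C²` away from the
origin, satisfying the sandwich condition for `Ψ_{p,0}` with constants `ν ≤ C`.
Then for every `η ≠ 0` and every `ξ`:
`(p-1)ν / |η|^(2-p) |ξ|² ≤ Ψ''(η)[ξ]² ≤ C / |η|^(2-p) |ξ|²`. -/
theorem stmt_7 (N : ℕ) (hN : 1 ≤ N) (p ν C : ℝ) (hp : 1 < p) (hp2 : p < 2)
    (hν : 0 < ν) (hνC : ν ≤ C)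
    (Ψ : EuclideanSpace ℝ (Fin N) → ℝ) (hΨ1 : ContDiff ℝ 1 Ψ)
    (hΨ2 : ContDiffOn ℝ 2 Ψ {(0 : EuclideanSpace ℝ (Fin N))}ᶜ)
    (hsand : SandwichCond N p 0 ν C Ψ) :
    ∀ η ξ : EuclideanSpace ℝ (Fin N), η ≠ 0 →
      (p - 1) * ν / ‖η‖ ^ (2 - p) * ‖ξ‖ ^ 2 ≤ (fderiv ℝ (fderiv ℝ Ψ) η ξ) ξ ∧
      (fderiv ℝ (fderiv ℝ Ψ) η ξ) ξ ≤ C / ‖η‖ ^ (2 - p) * ‖ξ‖ ^ 2 := by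
  intro η ξ hη
  have hp0 : p ≠ 0 := by linarith
  have hPsiPhi : PsiPK N p 0 = fun x : EuclideanSpace ℝ (Fin N) => (1/p) * ((‖x‖ ^ 2 : ℝ) ^ (p/2)) := by
    funext x
    simp [PsiPK, Real.zero_rpow hp0]
  obtain ⟨hs1, hs2⟩ := hsand
  rw [hPsiPhi] at hs1 hs2
  have hU : IsOpen ({(0:EuclideanSpace ℝ (Fin N))}ᶜ) := isOpen_compl_singleton
  have hηU : η ∈ ({(0:EuclideanSpace ℝ (Fin N))}ᶜ : Set (EuclideanSpace ℝ (Fin N))) := by simpa using hη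
  have hΦC : ContDiffOn ℝ 2 (fun x : EuclideanSpace ℝ (Fin N) => (1/p) * ((‖x‖ ^ 2 : ℝ) ^ (p/2))) {(0:EuclideanSpace ℝ (Fin N))}ᶜ :=
    Phi_contDiffOn p
  set Q : ℝ := (fderiv ℝ (fderiv ℝ Ψ) η ξ) ξ with hQdef
  set Qp : ℝ := (fderiv ℝ (fderiv ℝ (fun x : EuclideanSpace ℝ (Fin N) => (1/p) * ((‖x‖ ^ 2 : ℝ) ^ (p/2)))) η ξ) ξ
    with hQpdef
  -- the two convexity constraints
  have hC1 : ContDiffOn ℝ 2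
      (fun x : EuclideanSpace ℝ (Fin N) => Ψ x - ν * ((1/p) * ((‖x‖ ^ 2 : ℝ) ^ (p/2)))) {(0:EuclideanSpace ℝ (Fin N))}ᶜ :=
    hΨ2.sub (contDiffOn_const.mul hΦC)
  have hC2 : ContDiffOn ℝ 2
      (fun x : EuclideanSpace ℝ (Fin N) => C * ((1/p) * ((‖x‖ ^ 2 : ℝ) ^ (p/2))) - Ψ x) {(0:EuclideanSpace ℝ (Fin N))}ᶜ :=
    (contDiffOn_const.mul hΦC).sub hΨ2
  have hpos1 : 0 ≤ Q - ν * Qp := by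
    rw [← fderiv2_sub_const_mul hU hηU hΨ2 hΦC ν ξ]
    exact hessian_nonneg hU hηU hC1 hs1 ξ
  have hpos2 : 0 ≤ C * Qp - Q := by
    rw [← fderiv2_const_mul_sub hU hηU hΨ2 hΦC C ξ]
    exact hessian_nonneg hU hηU hC2 hs2 ξ
  -- explicit value of Qp and bounds
  have hQp : Qp = (p - 2) * (‖η‖ ^ 2 : ℝ) ^ (p/2 - 2) * (inner ℝ η ξ : ℝ) ^ 2
      + (‖η‖ ^ 2 : ℝ) ^ (p/2 - 1) * ‖ξ‖ ^ 2 := Phi_hessian hp0 hη ξ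
  have hr2pos : (0:ℝ) < ‖η‖ ^ 2 := pow_pos (norm_pos_iff.mpr hη) 2
  have hCS : (inner ℝ η ξ : ℝ) ^ 2 ≤ ‖η‖ ^ 2 * ‖ξ‖ ^ 2 := by
    have h := abs_real_inner_le_norm η ξ
    calc (inner ℝ η ξ : ℝ) ^ 2 = |(inner ℝ η ξ : ℝ)| ^ 2 := (sq_abs _).symm
      _ ≤ (‖η‖ * ‖ξ‖) ^ 2 := pow_le_pow_left₀ (abs_nonneg _) h 2
      _ = ‖η‖ ^ 2 * ‖ξ‖ ^ 2 := by ring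
  have hBpos : (0:ℝ) ≤ (‖η‖ ^ 2 : ℝ) ^ (p/2 - 2) := Real.rpow_nonneg hr2pos.le _
  have hBA : (‖η‖ ^ 2 : ℝ) ^ (p/2 - 2) * ‖η‖ ^ 2 = (‖η‖ ^ 2 : ℝ) ^ (p/2 - 1) := by
    nth_rewrite 2 [show (‖η‖ ^ 2 : ℝ) = (‖η‖ ^ 2 : ℝ) ^ (1:ℝ) by rw [Real.rpow_one]]
    rw [← Real.rpow_add hr2pos, show p/2 - 2 + 1 = p/2 - 1 by ring]
  have hA : (‖η‖ ^ 2 : ℝ) ^ (p/2 - 1) = (‖η‖ ^ (2 - p))⁻¹ := by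
    have h1 : (‖η‖ ^ 2 : ℝ) = ‖η‖ ^ ((2:ℕ) : ℝ) := (Real.rpow_natCast ‖η‖ 2).symm
    rw [h1, ← Real.rpow_mul (norm_nonneg η),
      show ((2:ℕ) : ℝ) * (p/2 - 1) = -(2 - p) by push_cast; ring,
      Real.rpow_neg (norm_nonneg η)]
  have hQp_lower : (p - 1) * (‖η‖ ^ 2 : ℝ) ^ (p/2 - 1) * ‖ξ‖ ^ 2 ≤ Qp := by
    rw [hQp]
    have hkey : (p - 2) * ((‖η‖ ^ 2 : ℝ) ^ (p/2 - 2) * (‖η‖ ^ 2 * ‖ξ‖ ^ 2))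
        ≤ (p - 2) * ((‖η‖ ^ 2 : ℝ) ^ (p/2 - 2) * (inner ℝ η ξ : ℝ) ^ 2) := by
      apply mul_le_mul_of_nonpos_left _ (by linarith)
      exact mul_le_mul_of_nonneg_left hCS hBpos
    have hrw : (‖η‖ ^ 2 : ℝ) ^ (p/2 - 2) * (‖η‖ ^ 2 * ‖ξ‖ ^ 2)
        = (‖η‖ ^ 2 : ℝ) ^ (p/2 - 1) * ‖ξ‖ ^ 2 := by
      rw [← mul_assoc, hBA]
    nlinarith [hkey, hrw]
  have hQp_upper : Qp ≤ (‖η‖ ^ 2 : ℝ) ^ (p/2 - 1) * ‖ξ‖ ^ 2 := by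
    rw [hQp]
    have : (p - 2) * (‖η‖ ^ 2 : ℝ) ^ (p/2 - 2) * (inner ℝ η ξ : ℝ) ^ 2 ≤ 0 := by
      apply mul_nonpos_of_nonpos_of_nonneg _ (sq_nonneg _)
      exact mul_nonpos_of_nonpos_of_nonneg (by linarith) hBpos
    linarith
  constructor
  · have h1 : ν * ((p - 1) * (‖η‖ ^ 2 : ℝ) ^ (p/2 - 1) * ‖ξ‖ ^ 2) ≤ ν * Qp :=
      mul_le_mul_of_nonneg_left hQp_lower hν.le
    have h2 : (p - 1) * ν / ‖η‖ ^ (2 - p) * ‖ξ‖ ^ 2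
        = ν * ((p - 1) * (‖η‖ ^ 2 : ℝ) ^ (p/2 - 1) * ‖ξ‖ ^ 2) := by
      rw [hA, div_eq_mul_inv]; ring
    linarith
  · have hC0 : (0:ℝ) ≤ C := le_trans hν.le hνC
    have h1 : C * Qp ≤ C * ((‖η‖ ^ 2 : ℝ) ^ (p/2 - 1) * ‖ξ‖ ^ 2) :=
      mul_le_mul_of_nonneg_left hQp_upper hC0
    have h2 : C / ‖η‖ ^ (2 - p) * ‖ξ‖ ^ 2
        = C * ((‖η‖ ^ 2 : ℝ) ^ (p/2 - 1) * ‖ξ‖ ^ 2) := by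
      rw [hA, div_eq_mul_inv]; ring
    linarith
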